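/- (No-go theorem for universality.) Let (C,T,C₀,⪰) be a target–context category and let φ : C_fun(I,T) → ℝ be monotone with respect to the lax context-reduction preorder ⪰^cr (i.e. t ⪰^cr t' implies φ(t) ≥ φ(t')). Let s : P⊗C₀ → T⊗C₀ be a simulator with compiler s_T and let Im_fun(s_T) be the functional image of s_T. If sup{φ(u) : u ∈ Im_fun(s_T)} < sup{φ(t) : t ∈ C_fun(I,T)} (suprema taken in the extended reals), then s is not a universal simulator. -/

import Mathlib

open CategoryTheory MonoidalCategory

universe w v u v' u'

/-- A gs-monoidal category: a symmetric monoidal category in which every object carries a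
commutative comonoid structure (copy and discard), compatible with tensor products. -/
class GSCat (C : Type u) [Category.{v} C] [MonoidalCategory C] [SymmetricCategory C] where
  copy : ∀ A : C, A ⟶ A ⊗ A
  discard : ∀ A : C, A ⟶ 𝟙_ C
  copy_assoc : ∀ A : C, copy A ≫ (copy A ▷ A) ≫ (α_ A A A).hom = copy A ≫ (A ◁ copy A)
  copy_comm : ∀ A : C, copy A ≫ (β_ A A).hom = copy A
  copy_counit_left : ∀ A : C, copy A ≫ (discard A ▷ A) ≫ (λ_ A).hom = 𝟙 A
  copy_counit_right : ∀ A : C, copy A ≫ (A ◁ discard A) ≫ (ρ_ A).hom = 𝟙 A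
  copy_tensor : ∀ A X : C, copy (A ⊗ X) = (copy A ⊗ₘ copy X) ≫ tensorμ A A X X
  discard_tensor : ∀ A X : C, discard (A ⊗ X) = (discard A ⊗ₘ discard X) ≫ (λ_ (𝟙_ C)).hom
  discard_unit : discard (𝟙_ C) = 𝟙 (𝟙_ C)

variable {C : Type u} [Category.{v} C] [MonoidalCategory C] [SymmetricCategory C] [GSCat C]

/-- The domain `dom(f) = ρ_A ∘ (id_A ⊗ (ε_X ∘ f)) ∘ Δ_A` of a morphism `f : A ⟶ X`. -/
def gsDom {A X : C} (f : A ⟶ X) : A ⟶ A :=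
  GSCat.copy A ≫ (A ◁ (f ≫ GSCat.discard X)) ≫ (ρ_ A).hom

/-- A morphism is normalized if `f ∘ dom(f) = f`. -/
def GsNormalized {A X : C} (f : A ⟶ X) : Prop := gsDom f ≫ f = f

/-- A morphism is functional if `Δ_X ∘ f = (f ⊗ f) ∘ Δ_A`. -/
def GsFunctional {A X : C} (f : A ⟶ X) : Prop :=
  f ≫ GSCat.copy X = GSCat.copy A ≫ (f ⊗ₘ f)

/-- A morphism is total if `ε_X ∘ f = ε_A`. -/
def GsTotal {A X : C} (f : A ⟶ X) : Prop := f ≫ GSCat.discard X = GSCat.discard A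

/-- `f ⊒ g` : `f` agrees with `g` on the domain of `g`, i.e. `f ∘ dom(g) = g`. -/
def GsRestrict {A X : C} (f g : A ⟶ X) : Prop := gsDom g ≫ f = g

/-- A gs-monoidal category is normalized if all of its morphisms are normalized. -/
class GsNormalizedCat (C : Type u) [Category.{v} C] [MonoidalCategory C]
    [SymmetricCategory C] [GSCat C] : Prop where
  norm : ∀ {A X : C} (f : A ⟶ X), GsNormalized f

/-- A target--context category: a (normalized) gs-monoidal category with distinguished
objects `T` (targets) and `C0` (contexts) together with an ambient preorder on each
hom-set into `T ⊗ C0`, containing the restriction order and preserved by precomposition. -/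
structure TCC (C : Type u) [Category.{v} C] [MonoidalCategory C] [SymmetricCategory C]
    [GSCat C] (T C0 : C) where
  amb : ∀ {A : C}, (A ⟶ T ⊗ C0) → (A ⟶ T ⊗ C0) → Prop
  amb_refl : ∀ {A : C} (f : A ⟶ T ⊗ C0), amb f f
  amb_trans : ∀ {A : C} {f g h : A ⟶ T ⊗ C0}, amb f g → amb g h → amb f h
  amb_of_restrict : ∀ {A : C} {f g : A ⟶ T ⊗ C0}, GsRestrict f g → amb f g
  amb_precomp : ∀ {A Z : C} {f g : A ⟶ T ⊗ C0} (h : Z ⟶ A), amb f g → amb (h ≫ f) (h ≫ g)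

/-- A simulator: a morphism `s : P ⊗ C0 ⟶ T ⊗ C0` of the form
`s = (s_T ⊗ s_C) ∘ (Δ_P ⊗ id)` with functional compiler `s_T : P ⟶ T` and
context reduction `s_C : P ⊗ C0 ⟶ C0`. -/
structure Simulator {C : Type u} [Category.{v} C] [MonoidalCategory C] [SymmetricCategory C]
    [GSCat C] (T C0 P : C) where
  s : P ⊗ C0 ⟶ T ⊗ C0
  sT : P ⟶ T
  sC : P ⊗ C0 ⟶ C0
  sT_functional : GsFunctional sT
  split : s = (GSCat.copy P ▷ C0) ≫ (α_ P P C0).hom ≫ (sT ⊗ₘ sC)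

/-- A simulator is universal if there is a lax reduction to the trivial simulator:
a functional `r : T ⟶ P` with `s ∘ (r ⊗ id) ⪰ id`. -/
def IsUniversal {T C0 : C} (𝒯 : TCC C T C0) {P : C} (s : Simulator T C0 P) : Prop :=
  ∃ r : T ⟶ P, GsFunctional r ∧ 𝒯.amb ((r ▷ C0) ≫ s.s) (𝟙 (T ⊗ C0))

/-- `f` lax context-reduces to `g` : there is `f_C : A ⊗ C0 ⟶ C0` with
`(f ⊗ f_C) ∘ (Δ_A ⊗ id) ⪰ g ⊗ id`. -/
def LaxCtxRed {T C0 : C} (𝒯 : TCC C T C0) {A : C} (f g : A ⟶ T) : Prop :=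
  ∃ fC : A ⊗ C0 ⟶ C0,
    𝒯.amb ((GSCat.copy A ▷ C0) ≫ (α_ A A C0).hom ≫ (f ⊗ₘ fC)) (g ▷ C0)

lemma gsFunctional_comp {A B X : C} {f : A ⟶ B} {g : B ⟶ X}
    (hf : GsFunctional f) (hg : GsFunctional g) : GsFunctional (f ≫ g) := by
  unfold GsFunctional at *
  rw [Category.assoc, hg, ← Category.assoc, hf, Category.assoc, tensorHom_comp_tensorHom]

/-- No-go theorem for universality: if `φ` is monotone on functional states
with respect to lax context-reduction and its supremum over the functional image of the
compiler `s_T` is strictly smaller than its supremum over all functional states of `T`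
(in the extended reals), then `s` is not universal. -/
theorem nogo_universality [GsNormalizedCat C] {T C0 : C} (𝒯 : TCC C T C0) {P : C}
    (s : Simulator T C0 P) (φ : (𝟙_ C ⟶ T) → ℝ)
    (hmono : ∀ t t' : 𝟙_ C ⟶ T, GsFunctional t → GsFunctional t' →
      LaxCtxRed 𝒯 t t' → φ t' ≤ φ t)
    (hlt : sSup ((fun t => (φ t : EReal)) ''
        {u : 𝟙_ C ⟶ T | ∃ a : 𝟙_ C ⟶ P, GsFunctional a ∧ u = a ≫ s.sT}) <
      sSup ((fun t => (φ t : EReal)) '' {t : 𝟙_ C ⟶ T | GsFunctional t})) :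
    ¬ IsUniversal 𝒯 s := by
  rintro ⟨r, hr, hamb⟩
  refine absurd hlt (not_lt.mpr ?_)
  apply sSup_le
  rintro x ⟨t, ht, rfl⟩
  have ha : GsFunctional (t ≫ r) := gsFunctional_comp ht hr
  have hu : GsFunctional ((t ≫ r) ≫ s.sT) := gsFunctional_comp ha s.sT_functional
  have hred : LaxCtxRed 𝒯 ((t ≫ r) ≫ s.sT) t := by
    refine ⟨((t ≫ r) ▷ C0) ≫ s.sC, ?_⟩
    have h := 𝒯.amb_precomp (t ▷ C0) hamb
    rw [Category.comp_id] at h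
    have heq : (t ▷ C0) ≫ (r ▷ C0) ≫ s.s =
        (GSCat.copy (𝟙_ C) ▷ C0) ≫ (α_ (𝟙_ C) (𝟙_ C) C0).hom ≫
          (((t ≫ r) ≫ s.sT) ⊗ₘ (((t ≫ r) ▷ C0) ≫ s.sC)) := by
      rw [s.split]
      calc (t ▷ C0) ≫ (r ▷ C0) ≫ (GSCat.copy P ▷ C0) ≫ (α_ P P C0).hom ≫ (s.sT ⊗ₘ s.sC)
          = (((t ≫ r) ≫ GSCat.copy P) ▷ C0) ≫ (α_ P P C0).hom ≫ (s.sT ⊗ₘ s.sC) := by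
            simp [comp_whiskerRight]
        _ = ((GSCat.copy (𝟙_ C) ≫ ((t ≫ r) ⊗ₘ (t ≫ r))) ▷ C0) ≫
              (α_ P P C0).hom ≫ (s.sT ⊗ₘ s.sC) := by rw [ha]
        _ = (GSCat.copy (𝟙_ C) ▷ C0) ≫ ((((t ≫ r) ⊗ₘ (t ≫ r)) ⊗ₘ 𝟙 C0) ≫
              (α_ P P C0).hom) ≫ (s.sT ⊗ₘ s.sC) := by
            simp [comp_whiskerRight, tensorHom_id]
        _ = (GSCat.copy (𝟙_ C) ▷ C0) ≫ ((α_ (𝟙_ C) (𝟙_ C) C0).hom ≫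
              ((t ≫ r) ⊗ₘ ((t ≫ r) ⊗ₘ 𝟙 C0))) ≫ (s.sT ⊗ₘ s.sC) := by
            rw [associator_naturality]
        _ = (GSCat.copy (𝟙_ C) ▷ C0) ≫ (α_ (𝟙_ C) (𝟙_ C) C0).hom ≫
              (((t ≫ r) ≫ s.sT) ⊗ₘ (((t ≫ r) ▷ C0) ≫ s.sC)) := by
            simp [tensorHom_comp_tensorHom, tensorHom_id]
    rw [heq] at h
    exact h
  have hle : φ t ≤ φ ((t ≫ r) ≫ s.sT) := hmono _ t hu ht hred
  refine le_trans (EReal.coe_le_coe_iff.mpr hle) (le_sSup ?_)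
  exact ⟨(t ≫ r) ≫ s.sT, ⟨t ≫ r, ha, rfl⟩, rfl⟩
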